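/- If a polynomial P of the form P(x) = Σ_{k=0}^{n} λ_k · C(x, k) with integer coefficients λ_k satisfies that P(j) - P(j') is divisible by j - j' for all distinct j, j' in {0, 1, ..., n}, then for each k, λ_k is an integer multiple of lcm(1, ..., k). -/

import Mathlib

open Polynomial Finset

namespace CoeffLcmAux

/-! ### A linear functional on polynomials: `L P q = ∑ j, q.coeff j * P j`. -/

noncomputable def L (P : ℤ → ℤ) (q : Polynomial ℤ) : ℤ := q.sum fun j a => a * P j

lemma L_add (P : ℤ → ℤ) (q r : Polynomial ℤ) : L P (q + r) = L P q + L P r :=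
  Polynomial.sum_add_index q r _ (fun _ => zero_mul _) (fun _ b₁ b₂ => add_mul b₁ b₂ _)

lemma L_monomial (P : ℤ → ℤ) (j : ℕ) (a : ℤ) : L P (monomial j a) = a * P j :=
  Polynomial.sum_monomial_index a _ (zero_mul _)

lemma L_zero (P : ℤ → ℤ) : L P 0 = 0 := Polynomial.sum_zero_index _

lemma L_sub (P : ℤ → ℤ) (q r : Polynomial ℤ) : L P (q - r) = L P q - L P r := by
  have h := L_add P (q - r) r
  rw [sub_add_cancel] at h
  linarith

lemma L_sum (P : ℤ → ℤ) {ι : Type*} (s : Finset ι) (f : ι → Polynomial ℤ) :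
    L P (∑ b ∈ s, f b) = ∑ b ∈ s, L P (f b) := by
  classical
  induction s using Finset.induction with
  | empty => simp [L_zero]
  | insert _ _ h ih => rw [Finset.sum_insert h, Finset.sum_insert h, L_add, ih]

lemma L_C_mul (P : ℤ → ℤ) (z : ℤ) (q : Polynomial ℤ) : L P (C z * q) = z * L P q := by
  induction q using Polynomial.induction_on' with
  | add p q hp hq => rw [mul_add, L_add, L_add, hp, hq, mul_add]
  | monomial j a => rw [C_mul_monomial, L_monomial, L_monomial, mul_assoc]

lemma L_X_pow_mul (P : ℤ → ℤ) (m : ℕ) (r : Polynomial ℤ) :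
    L P (X ^ m * r) = r.sum fun j a => a * P (j + m) := by
  induction r using Polynomial.induction_on' with
  | add p q hp hq =>
      rw [mul_add, L_add, hp, hq,
        Polynomial.sum_add_index p q (fun j a => a * P (↑j + ↑m)) (fun _ => zero_mul _)
          (fun _ b₁ b₂ => add_mul b₁ b₂ _)]
  | monomial j a =>
      rw [X_pow_eq_monomial, monomial_mul_monomial, one_mul, L_monomial,
        Polynomial.sum_monomial_index a (fun j a => a * P (↑j + ↑m)) (zero_mul _)]
      push_cast
      ring_nf

/-! ### Divisibility of the functional on multiples of `X^m - 1`. -/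

lemma dvd_L {n : ℕ} {P : ℤ → ℤ}
    (hdiv : ∀ j j' : ℕ, j ≤ n → j' ≤ n → j ≠ j' →
      ((j : ℤ) - (j' : ℤ)) ∣ P (j : ℤ) - P (j' : ℤ))
    (m : ℕ) (hm : 1 ≤ m) (r : Polynomial ℤ) (hr : r.natDegree + m ≤ n) :
    (m : ℤ) ∣ L P ((X ^ m - 1) * r) := by
  rw [sub_mul, one_mul, L_sub, L_X_pow_mul]
  unfold L
  simp only [Polynomial.sum_def]
  rw [← Finset.sum_sub_distrib]
  apply Finset.dvd_sum
  intro j hj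
  have hjd : j ≤ r.natDegree := Polynomial.le_natDegree_of_mem_supp j hj
  have hjn : j + m ≤ n := by omega
  have hd := hdiv (j + m) j hjn (by omega) (by omega)
  have hcast : ((j + m : ℕ) : ℤ) - (j : ℤ) = (m : ℤ) := by push_cast; ring
  rw [hcast] at hd
  have heq : r.coeff j * P ((j : ℤ) + (m : ℤ)) - r.coeff j * P (j : ℤ)
      = r.coeff j * (P ((j + m : ℕ) : ℤ) - P (j : ℤ)) := by push_cast; ring
  rw [heq]
  exact hd.mul_left _

/-! ### `p` divides `(X-1)^p - (X^p - 1)` in `ℤ[X]`, and the lifted version. -/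

lemma base_dvd (p : ℕ) (hp : p.Prime) :
    (C (p : ℤ)) ∣ (X - 1 : Polynomial ℤ) ^ p - (X ^ p - 1) := by
  haveI := Fact.mk hp
  rw [C_dvd_iff_dvd_coeff]
  intro i
  have hmap : Polynomial.map (Int.castRingHom (ZMod p)) ((X - 1 : Polynomial ℤ) ^ p - (X ^ p - 1))
      = 0 := by
    rw [Polynomial.map_sub, Polynomial.map_pow, Polynomial.map_sub, Polynomial.map_sub,
      Polynomial.map_pow, Polynomial.map_one, Polynomial.map_X, sub_pow_char, one_pow, sub_self]
  have h := congrArg (fun q => Polynomial.coeff q i) hmap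
  simp only [Polynomial.coeff_map, Polynomial.coeff_zero] at h
  exact (ZMod.intCast_zmod_eq_zero_iff_dvd _ p).mp h

lemma chain_dvd (p : ℕ) (hp : p.Prime) (s : ℕ) :
    (C (p : ℤ)) ^ (s + 1) * (X - C 1) ∣
      (X - 1 : Polynomial ℤ) ^ p ^ (s + 1) - (X ^ p - 1) ^ p ^ s := by
  have h1 : (C (p : ℤ)) ^ (s + 1) ∣ (X - 1 : Polynomial ℤ) ^ p ^ (s + 1) - (X ^ p - 1) ^ p ^ s := by
    have hb : ((p : ℕ) : Polynomial ℤ) ∣ ((X - 1 : Polynomial ℤ) ^ p) - (X ^ p - 1) := by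
      rw [← C_eq_natCast]; exact base_dvd p hp
    have h := dvd_sub_pow_of_dvd_sub hb s
    rw [← pow_mul, ← pow_succ'] at h
    rwa [← C_eq_natCast] at h
  have h2 : (X - C 1 : Polynomial ℤ) ∣
      (X - 1 : Polynomial ℤ) ^ p ^ (s + 1) - (X ^ p - 1) ^ p ^ s := by
    rw [dvd_iff_isRoot]
    simp [IsRoot, zero_pow (pow_ne_zero _ hp.ne_zero)]
  obtain ⟨q, hq⟩ := h2
  rw [hq] at h1 ⊢
  have hprime : Prime (C ((p : ℕ) : ℤ)) := by
    rw [Polynomial.prime_C_iff]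
    exact Nat.prime_iff_prime_int.mp hp
  have hnd : ¬ C ((p : ℕ) : ℤ) ∣ (X - C 1 : Polynomial ℤ) := by
    rw [C_dvd_iff_dvd_coeff]
    push_neg
    refine ⟨1, ?_⟩
    simp only [coeff_sub, coeff_X_one, coeff_C]
    norm_num
    intro h
    exact hp.one_lt.ne' (Nat.dvd_one.mp (by exact_mod_cast h))
  have h3 := hprime.pow_dvd_of_dvd_mul_left (s + 1) hnd h1
  obtain ⟨r, hr⟩ := h3
  exact ⟨r, by rw [hr]; ring⟩

/-! ### The decomposition of `(X-1)^(p^a)` with degree control. -/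

lemma decomp (p : ℕ) (hp : p.Prime) (a : ℕ) :
    ∃ c : ℕ → Polynomial ℤ,
      (X - 1 : Polynomial ℤ) ^ p ^ a
        = ∑ b ∈ Finset.range (a + 1), C ((p : ℤ) ^ (a - b)) * c b * (X ^ p ^ b - 1) ∧
      ∀ b ∈ Finset.range (a + 1), (c b).natDegree + p ^ b ≤ p ^ a := by
  induction a with
  | zero =>
    refine ⟨fun _ => 1, by simp, ?_⟩
    intro b hb
    simp only [Finset.mem_range] at hb
    have hb0 : b = 0 := by omega
    subst hb0
    simp
  | succ a ih =>
    obtain ⟨c, hc, hdeg⟩ := ih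
    obtain ⟨h, hh⟩ := chain_dvd p hp a
    set φ : Polynomial ℤ →+* Polynomial ℤ :=
      Polynomial.eval₂RingHom (Polynomial.C : ℤ →+* Polynomial ℤ) (X ^ p) with hφdef
    have hφX : φ X = X ^ p := Polynomial.eval₂_X _ _
    have hφC : ∀ z : ℤ, φ (C z) = C z := fun z => Polynomial.eval₂_C _ _
    have hφcomp : ∀ r : Polynomial ℤ, φ r = r.comp (X ^ p) := fun r => rfl
    have hXp : ∀ b : ℕ, φ (X ^ p ^ b - 1) = X ^ p ^ (b + 1) - 1 := by
      intro b
      rw [map_sub, map_pow, map_one, hφX, ← pow_mul, ← pow_succ']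
    have hmain : (X ^ p - 1 : Polynomial ℤ) ^ p ^ a
        = ∑ b ∈ Finset.range (a + 1), C ((p : ℤ) ^ (a - b)) * φ (c b) * (X ^ p ^ (b + 1) - 1) := by
      have h2 := congrArg φ hc
      rw [map_pow, map_sub, map_one, hφX, map_sum] at h2
      simp only [map_mul, hφC, hXp] at h2
      exact h2
    have hdegh : h.natDegree + p ^ 0 ≤ p ^ (a + 1) := by
      rcases eq_or_ne h 0 with h0 | h0
      · rw [h0, natDegree_zero, zero_add, pow_zero]
        exact Nat.one_le_pow _ _ hp.pos
      · have hne1 : (C ((p : ℤ)) ^ (a + 1) : Polynomial ℤ) ≠ 0 := by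
          apply pow_ne_zero
          simpa using (by exact_mod_cast hp.ne_zero : (p : ℤ) ≠ 0)
        have hne2 : (X - C 1 : Polynomial ℤ) ≠ 0 := X_sub_C_ne_zero 1
        have hdr : (C ((p : ℤ)) ^ (a + 1) * (X - C 1) * h).natDegree = 1 + h.natDegree := by
          rw [natDegree_mul (mul_ne_zero hne1 hne2) h0, natDegree_mul hne1 hne2,
            natDegree_pow, natDegree_C, natDegree_X_sub_C]
          ring
        have hdl : ((X - 1 : Polynomial ℤ) ^ p ^ (a + 1) - (X ^ p - 1) ^ p ^ a).natDegree
            ≤ p ^ (a + 1) := by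
          refine le_trans (natDegree_sub_le _ _) ?_
          apply max_le
          · refine le_trans (natDegree_pow_le) ?_
            have hx1 : (X - 1 : Polynomial ℤ).natDegree = 1 := by
              rw [show (1 : Polynomial ℤ) = C 1 by simp, natDegree_X_sub_C]
            rw [hx1, mul_one]
          · refine le_trans (natDegree_pow_le) ?_
            have hxp : (X ^ p - 1 : Polynomial ℤ).natDegree ≤ p := by
              refine le_trans (natDegree_sub_le _ _) ?_
              simp [natDegree_X_pow]
            calc p ^ a * (X ^ p - 1 : Polynomial ℤ).natDegree ≤ p ^ a * p :=
                  Nat.mul_le_mul_left _ hxp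
              _ = p ^ (a + 1) := (pow_succ p a).symm
        rw [hh, hdr] at hdl
        simpa [pow_zero] using by omega
    refine ⟨fun b => match b with | 0 => h | (b + 1) => φ (c b), ?_, ?_⟩
    · rw [Finset.sum_range_succ']
      have hsum : ∑ b ∈ Finset.range (a + 1),
          C ((p : ℤ) ^ (a + 1 - (b + 1))) * (match b + 1 with | 0 => h | (b + 1) => φ (c b)) *
            (X ^ p ^ (b + 1) - 1)
          = ∑ b ∈ Finset.range (a + 1),
              C ((p : ℤ) ^ (a - b)) * φ (c b) * (X ^ p ^ (b + 1) - 1) := by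
        apply Finset.sum_congr rfl
        intro b _
        rw [Nat.succ_sub_succ]
      rw [hsum, ← hmain]
      have hh' : (X - 1 : Polynomial ℤ) ^ p ^ (a + 1)
          = (X ^ p - 1) ^ p ^ a + C ((p : ℤ)) ^ (a + 1) * (X - C 1) * h := by
        rw [← hh]; ring
      rw [hh']
      simp only [Nat.sub_zero, pow_zero, pow_one, C_pow, C_1]
      ring
    · intro b hb
      match b with
      | 0 => exact hdegh
      | (b + 1) =>
        have hb' : b ∈ Finset.range (a + 1) := by
          simp only [Finset.mem_range] at hb ⊢; omega
        have hd := hdeg b hb'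
        have hcomp : (φ (c b)).natDegree ≤ (c b).natDegree * p := by
          rw [hφcomp]
          refine le_trans (natDegree_comp_le) ?_
          rw [natDegree_X_pow]
        calc (φ (c b)).natDegree + p ^ (b + 1) ≤ (c b).natDegree * p + p ^ b * p := by
              rw [pow_succ]; omega
          _ = ((c b).natDegree + p ^ b) * p := by ring
          _ ≤ p ^ a * p := Nat.mul_le_mul_right _ hd
          _ = p ^ (a + 1) := (pow_succ p a).symm

/-! ### Prime power divisibility of `L P ((X-1)^k)`. -/

lemma prime_pow_dvd {n : ℕ} {P : ℤ → ℤ}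
    (hdiv : ∀ j j' : ℕ, j ≤ n → j' ≤ n → j ≠ j' →
      ((j : ℤ) - (j' : ℤ)) ∣ P (j : ℤ) - P (j' : ℤ))
    {k : ℕ} (hk : k ≤ n) (p : ℕ) (hp : p.Prime) (a : ℕ) (hpa : p ^ a ≤ k) :
    ((p : ℤ) ^ a) ∣ L P ((X - 1 : Polynomial ℤ) ^ k) := by
  obtain ⟨c, hc, hdeg⟩ := decomp p hp a
  have hk' : (X - 1 : Polynomial ℤ) ^ k = (X - 1) ^ p ^ a * (X - 1) ^ (k - p ^ a) := by
    rw [← pow_add]; congr 1; omega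
  rw [hk', hc, Finset.sum_mul, L_sum]
  apply Finset.dvd_sum
  intro b hb
  have hba : b ≤ a := by simp only [Finset.mem_range] at hb; omega
  have hterm : C ((p : ℤ) ^ (a - b)) * c b * (X ^ p ^ b - 1) * (X - 1) ^ (k - p ^ a)
      = C ((p : ℤ) ^ (a - b)) * ((X ^ p ^ b - 1) * (c b * (X - 1) ^ (k - p ^ a))) := by ring
  rw [hterm, L_C_mul]
  have hsplit : (p : ℤ) ^ a = (p : ℤ) ^ (a - b) * (p : ℤ) ^ b := by
    rw [← pow_add]; congr 1; omega
  rw [hsplit]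
  refine mul_dvd_mul_left _ ?_
  have hdegr : (c b * (X - 1) ^ (k - p ^ a)).natDegree + p ^ b ≤ n := by
    have h1 := hdeg b hb
    have h2 : ((X - 1 : Polynomial ℤ) ^ (k - p ^ a)).natDegree ≤ k - p ^ a := by
      refine le_trans natDegree_pow_le ?_
      have hx1 : (X - 1 : Polynomial ℤ).natDegree = 1 := by
        rw [show (1 : Polynomial ℤ) = C 1 by simp, natDegree_X_sub_C]
      rw [hx1, mul_one]
    have h3 := Polynomial.natDegree_mul_le (p := c b) (q := (X - 1 : Polynomial ℤ) ^ (k - p ^ a))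
    omega
  have := dvd_L hdiv (p ^ b) (Nat.one_le_pow _ _ hp.pos) _ hdegr
  rwa [Nat.cast_pow] at this

/-! ### Identification of the functional with the coefficient. -/

lemma L_eq_lam {n : ℕ} (lam : ℕ → ℤ) (P : ℤ → ℤ)
    (hP : ∀ x : ℤ, P x = ∑ i ∈ Finset.range (n + 1), lam i * Ring.choose x i)
    {k : ℕ} (hk : k ≤ n) : L P ((X - 1 : Polynomial ℤ) ^ k) = lam k := by
  set q : Polynomial ℤ := (X - 1) ^ k with hq
  have key : ∀ i : ℕ, (∑ j ∈ q.support, q.coeff j * (Nat.choose j i : ℤ))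
      = (q.comp (X + 1)).coeff i := by
    intro i
    rw [Polynomial.comp, Polynomial.eval₂_eq_sum, Polynomial.sum_def,
      Polynomial.finset_sum_coeff]
    apply Finset.sum_congr rfl
    intro j _
    rw [Polynomial.coeff_C_mul, coeff_X_add_one_pow]
  have hcomp : q.comp (X + 1) = X ^ k := by
    rw [hq, Polynomial.pow_comp, Polynomial.sub_comp, Polynomial.X_comp, Polynomial.one_comp,
      add_sub_cancel_right]
  unfold L
  rw [Polynomial.sum_def]
  have step1 : ∑ j ∈ q.support, q.coeff j * P (j : ℤ)
      = ∑ j ∈ q.support, ∑ i ∈ Finset.range (n + 1),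
          lam i * (q.coeff j * (Nat.choose j i : ℤ)) := by
    apply Finset.sum_congr rfl
    intro j _
    rw [hP (j : ℤ), Finset.mul_sum]
    apply Finset.sum_congr rfl
    intro i _
    rw [Ring.choose_natCast]
    ring
  rw [step1, Finset.sum_comm]
  have step2 : ∀ i ∈ Finset.range (n + 1),
      (∑ j ∈ q.support, lam i * (q.coeff j * (Nat.choose j i : ℤ)))
        = lam i * (X ^ k : Polynomial ℤ).coeff i := by
    intro i _
    rw [← Finset.mul_sum, key i, hcomp]
  rw [Finset.sum_congr rfl step2]
  simp only [Polynomial.coeff_X_pow, mul_ite, mul_one, mul_zero]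
  rw [Finset.sum_ite_eq' (Finset.range (n + 1)) k lam]
  rw [if_pos (Finset.mem_range.mpr (by omega))]

end CoeffLcmAux

/-- lcm(1,...,n), with value 1 for n = 0. -/
noncomputable def lcmUpTo (n : ℕ) : ℕ := (Finset.Icc 1 n).lcm id

/-- If P(x) = Σ_{k=0}^{n} λ_k·C(x,k) with integer coefficients satisfies that
P(j) - P(j') is divisible by j - j' for all distinct j,j' ∈ {0,...,n},
then each λ_k is a multiple of lcm(1,...,k). -/
theorem coeff_multiple_of_lcm (n : ℕ) (lam : ℕ → ℤ)
    (P : ℤ → ℤ)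
    (hP : ∀ x : ℤ, P x = ∑ k ∈ Finset.range (n + 1), lam k * Ring.choose x k)
    (hdiv : ∀ j j' : ℕ, j ≤ n → j' ≤ n → j ≠ j' →
      ((j : ℤ) - (j' : ℤ)) ∣ P (j : ℤ) - P (j' : ℤ)) :
    ∀ k : ℕ, k ≤ n → (lcmUpTo k : ℤ) ∣ lam k := by
  intro k hk
  have hLk := CoeffLcmAux.L_eq_lam lam P hP hk
  rw [← hLk]
  set z := CoeffLcmAux.L P ((X - 1 : Polynomial ℤ) ^ k) with hz
  have hdvd_nat : ∀ m : ℕ, 1 ≤ m → m ≤ k → m ∣ z.natAbs := by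
    intro m h1 h2
    rw [Nat.dvd_iff_prime_pow_dvd_dvd]
    intro p t hp hpt
    have hp' : p.Prime := hp
    have hple : p ^ t ≤ k := le_trans (Nat.le_of_dvd h1 hpt) h2
    have hz' := CoeffLcmAux.prime_pow_dvd hdiv hk p hp' t hple
    have hz'' : ((p ^ t : ℕ) : ℤ) ∣ z := by push_cast; exact hz'
    have := Int.natAbs_dvd_natAbs.mpr hz''
    rwa [Int.natAbs_natCast] at this
  rw [← Int.natAbs_dvd_natAbs, Int.natAbs_natCast]
  unfold lcmUpTo
  apply Finset.lcm_dvd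
  intro m hm
  simp only [Finset.mem_Icc] at hm
  exact hdvd_nat m hm.1 hm.2
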